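/- If G is a graph of order n with minimum hop degree δ_h ≥ 1, then γ_{2sr}(G) ≤ 2n·(ln(δ_h + 1) + 1)/(δ_h + 1). -/

import Mathlib

open Finset

noncomputable section
open scoped Classical

variable {n : ℕ}

/-- The set of vertices at distance exactly 2 from `i`. -/
def N2 (G : SimpleGraph (Fin n)) (i : Fin n) : Finset (Fin n) :=
  Finset.univ.filter (fun j => G.dist i j = 2)

/-- The neighborhood of `i`. -/
def Nbr (G : SimpleGraph (Fin n)) (i : Fin n) : Finset (Fin n) :=
  Finset.univ.filter (fun j => G.Adj i j)

/-- Hop degree of a vertex. -/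
def hopDeg (G : SimpleGraph (Fin n)) (i : Fin n) : ℕ := (N2 G i).card

/-- Minimum hop degree. -/
def minHopDeg (G : SimpleGraph (Fin n)) : ℕ := ⨅ i, hopDeg G i

/-- Minimum degree. -/
def minDeg (G : SimpleGraph (Fin n)) : ℕ := ⨅ i, (Nbr G i).card

def IsHopDomSet (G : SimpleGraph (Fin n)) (S : Finset (Fin n)) : Prop :=
  ∀ u, u ∉ S → ∃ v ∈ S, G.dist u v = 2

def IsTwoStepDomSet (G : SimpleGraph (Fin n)) (S : Finset (Fin n)) : Prop :=
  ∀ u : Fin n, ∃ v ∈ S, G.dist u v = 2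

def IsRestrainedHopDomSet (G : SimpleGraph (Fin n)) (S : Finset (Fin n)) : Prop :=
  IsHopDomSet G S ∧ ∀ u, u ∉ S → ∃ v, v ∉ S ∧ G.Adj u v

def IsTotalRestrainedHopDomSet (G : SimpleGraph (Fin n)) (S : Finset (Fin n)) : Prop :=
  IsTwoStepDomSet G S ∧ ∀ u, u ∉ S → ∃ v, v ∉ S ∧ G.Adj u v

def IsTwoStepRestrainedDomSet (G : SimpleGraph (Fin n)) (S : Finset (Fin n)) : Prop :=
  IsHopDomSet G S ∧ ∀ u, u ∉ S → ∃ v, v ∉ S ∧ G.dist u v = 2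

def IsTotalTwoStepRestrainedDomSet (G : SimpleGraph (Fin n)) (S : Finset (Fin n)) : Prop :=
  IsTwoStepDomSet G S ∧ ∀ u, u ∉ S → ∃ v, v ∉ S ∧ G.dist u v = 2

def hopDomNum (G : SimpleGraph (Fin n)) : ℕ :=
  sInf {k | ∃ S : Finset (Fin n), IsHopDomSet G S ∧ S.card = k}

def twoStepDomNum (G : SimpleGraph (Fin n)) : ℕ :=
  sInf {k | ∃ S : Finset (Fin n), IsTwoStepDomSet G S ∧ S.card = k}

def rhDomNum (G : SimpleGraph (Fin n)) : ℕ :=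
  sInf {k | ∃ S : Finset (Fin n), IsRestrainedHopDomSet G S ∧ S.card = k}

def trhDomNum (G : SimpleGraph (Fin n)) : ℕ :=
  sInf {k | ∃ S : Finset (Fin n), IsTotalRestrainedHopDomSet G S ∧ S.card = k}

def tsrDomNum (G : SimpleGraph (Fin n)) : ℕ :=
  sInf {k | ∃ S : Finset (Fin n), IsTwoStepRestrainedDomSet G S ∧ S.card = k}

def ttsrDomNum (G : SimpleGraph (Fin n)) : ℕ :=
  sInf {k | ∃ S : Finset (Fin n), IsTotalTwoStepRestrainedDomSet G S ∧ S.card = k}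

/-- The graph `Dist(G;2)` joining vertices at distance exactly 2 in `G`. -/
def dist2Graph (G : SimpleGraph (Fin n)) : SimpleGraph (Fin n) where
  Adj u v := u ≠ v ∧ G.dist u v = 2
  symm := by
    refine ⟨?_⟩
    intro u v h
    exact ⟨h.1.symm, by rw [SimpleGraph.dist_comm]; exact h.2⟩
  loopless := ⟨fun v h => h.1 rfl⟩

def domNum (H : SimpleGraph (Fin n)) : ℕ :=
  sInf {k | ∃ S : Finset (Fin n), (∀ u, u ∉ S → ∃ v ∈ S, H.Adj u v) ∧ S.card = k}

def totalDomNum (H : SimpleGraph (Fin n)) : ℕ :=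
  sInf {k | ∃ S : Finset (Fin n), (∀ u : Fin n, ∃ v ∈ S, H.Adj u v) ∧ S.card = k}

/-- Matching number: maximum number of edges in a matching. -/
def matchingNum (G : SimpleGraph (Fin n)) : ℕ :=
  sSup {k | ∃ M : SimpleGraph.Subgraph G, M.IsMatching ∧ M.edgeSet.ncard = k}

/-- A hop matching: a set of paths of length two, no two of which share an end vertex. -/
def IsHopMatching (G : SimpleGraph (Fin n)) (H : Finset (Fin n × Fin n × Fin n)) : Prop :=
  (∀ t ∈ H, G.Adj t.1 t.2.1 ∧ G.Adj t.2.1 t.2.2 ∧ t.1 ≠ t.2.2) ∧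
  ∀ t ∈ H, ∀ t' ∈ H, t ≠ t' →
    t.1 ≠ t'.1 ∧ t.1 ≠ t'.2.2 ∧ t.2.2 ≠ t'.1 ∧ t.2.2 ≠ t'.2.2

/-- Hop matching number. -/
def hopMatchingNum (G : SimpleGraph (Fin n)) : ℕ :=
  sSup {k | ∃ H : Finset (Fin n × Fin n × Fin n), IsHopMatching G H ∧ H.card = k}

def frh (G : SimpleGraph (Fin n)) (p : Fin n → ℝ) : ℝ :=
  (∑ i, p i) + (∑ i, (1 - p i) * ∏ j ∈ N2 G i, (1 - p j)) +
  ∑ i, (1 - p i) * (1 - (1 - p i) * ∏ j ∈ N2 G i, (1 - p j)) *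
    ∏ j ∈ Nbr G i, (p j + (1 - p j) * ∏ k ∈ N2 G j, (1 - p k))

def f2sr (G : SimpleGraph (Fin n)) (p : Fin n → ℝ) : ℝ :=
  (∑ i, p i) + (∑ i, (1 - p i) * ∏ j ∈ N2 G i, (1 - p j)) +
  ∑ i, (1 - p i) * (1 - (1 - p i) * ∏ j ∈ N2 G i, (1 - p j)) *
    ∏ j ∈ N2 G i, (p j + (1 - p j) * ∏ k ∈ N2 G j, (1 - p k))

def ZSet (G : SimpleGraph (Fin n)) (X : Finset (Fin n)) : Finset (Fin n) :=
  Finset.univ.filter (fun i => i ∉ X ∧ N2 G i ∩ X = ∅)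

def YSet (G : SimpleGraph (Fin n)) (X : Finset (Fin n)) : Finset (Fin n) :=
  Finset.univ.filter (fun i => i ∉ X ∪ ZSet G X ∧ Nbr G i ⊆ X ∪ ZSet G X)

def DSet (G : SimpleGraph (Fin n)) (X : Finset (Fin n)) : Finset (Fin n) :=
  X ∪ ZSet G X ∪ YSet G X


namespace Stmt17Aux

/-- Second kind of Y-set: vertices outside `X ∪ Z` all of whose distance-2 vertices lie in `X ∪ Z`. -/
def Y2 (G : SimpleGraph (Fin n)) (X : Finset (Fin n)) : Finset (Fin n) :=
  Finset.univ.filter (fun i => i ∉ X ∪ ZSet G X ∧ N2 G i ⊆ X ∪ ZSet G X)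

def D2 (G : SimpleGraph (Fin n)) (X : Finset (Fin n)) : Finset (Fin n) :=
  X ∪ ZSet G X ∪ Y2 G X

lemma mem_N2 {G : SimpleGraph (Fin n)} {i j : Fin n} : j ∈ N2 G i ↔ G.dist i j = 2 := by
  simp [N2]

lemma mem_ZSet {G : SimpleGraph (Fin n)} {X : Finset (Fin n)} {i : Fin n} :
    i ∈ ZSet G X ↔ i ∉ X ∧ N2 G i ∩ X = ∅ := by simp [ZSet]

lemma mem_Y2 {G : SimpleGraph (Fin n)} {X : Finset (Fin n)} {i : Fin n} :
    i ∈ Y2 G X ↔ i ∉ X ∪ ZSet G X ∧ N2 G i ⊆ X ∪ ZSet G X := by simp [Y2]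

lemma D2_isTSR (G : SimpleGraph (Fin n)) (X : Finset (Fin n)) :
    IsTwoStepRestrainedDomSet G (D2 G X) := by
  constructor
  · intro u hu
    have huX : u ∉ X := fun h => hu (by simp [D2, Finset.mem_union]; tauto)
    have huZ : u ∉ ZSet G X := fun h => hu (by simp [D2, Finset.mem_union]; tauto)
    rw [mem_ZSet] at huZ
    push_neg at huZ
    obtain ⟨v, hv⟩ := huZ huX
    rw [Finset.mem_inter] at hv
    refine ⟨v, by simp [D2, Finset.mem_union]; tauto, mem_N2.1 hv.1⟩
  · intro u hu
    have huXZ : u ∉ X ∪ ZSet G X := fun h => hu (by simp [D2, Finset.mem_union] at *; tauto)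
    have huY : u ∉ Y2 G X := fun h => hu (by simp [D2, Finset.mem_union]; tauto)
    rw [mem_Y2] at huY
    push_neg at huY
    obtain ⟨v, hvN, hvXZ⟩ := Finset.not_subset.1 (huY huXZ)
    refine ⟨v, ?_, mem_N2.1 hvN⟩
    intro hvD
    simp only [D2, Finset.mem_union] at hvD
    rcases hvD with (h | h)
    · exact hvXZ (by simpa [Finset.mem_union] using h)
    · rw [mem_Y2] at h
      exact huXZ (h.2 (mem_N2.2 (by rw [SimpleGraph.dist_comm]; exact mem_N2.1 hvN)))

/-- the Bernoulli product weight -/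
def mu (p : ℝ) (X : Finset (Fin n)) : ℝ :=
  p ^ X.card * (1 - p) ^ ((Finset.univ : Finset (Fin n)) \ X).card

lemma sum_bern {α : Type*} [DecidableEq α] (p : ℝ) (s : Finset α) :
    ∑ X ∈ s.powerset, p ^ X.card * (1-p) ^ (s \ X).card = 1 := by
  have h := Finset.prod_add (fun _ : α => p) (fun _ : α => (1-p)) s
  simp [Finset.prod_const] at h
  rw [← h]

lemma sum_mu (p : ℝ) :
    ∑ X ∈ (Finset.univ : Finset (Fin n)).powerset, mu p X = 1 := sum_bern p _

lemma mu_nonneg {p : ℝ} (h0 : 0 ≤ p) (h1 : p ≤ 1) (X : Finset (Fin n)) : 0 ≤ mu p X := by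
  have : (0:ℝ) ≤ 1 - p := by linarith
  exact mul_nonneg (pow_nonneg h0 _) (pow_nonneg this _)

lemma mu_pos {p : ℝ} (h0 : 0 < p) (h1 : p < 1) (X : Finset (Fin n)) : 0 < mu p X := by
  have : (0:ℝ) < 1 - p := by linarith
  exact mul_pos (pow_pos h0 _) (pow_pos this _)

/-- Probability that `X` avoids a fixed set `T`. -/
lemma prob_avoid (p : ℝ) (T : Finset (Fin n)) :
    ∑ X ∈ (Finset.univ : Finset (Fin n)).powerset.filter (fun X => X ∩ T = ∅), mu p X
      = (1-p) ^ T.card := by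
  classical
  have hset : (Finset.univ : Finset (Fin n)).powerset.filter (fun X => X ∩ T = ∅)
      = ((Finset.univ : Finset (Fin n)) \ T).powerset := by
    ext X
    simp [Finset.subset_sdiff, ← Finset.disjoint_iff_inter_eq_empty]
  rw [hset]
  have hcard : ∀ X ∈ ((Finset.univ : Finset (Fin n)) \ T).powerset,
      mu p X = (1-p) ^ T.card *
        (p ^ X.card * (1-p) ^ (((Finset.univ : Finset (Fin n)) \ T) \ X).card) := by
    intro X hX
    rw [Finset.mem_powerset] at hX
    have hdisj : Disjoint T X := by
      have := (Finset.subset_sdiff.1 hX).2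
      exact this.symm
    have hunion : (Finset.univ : Finset (Fin n)) \ X
        = T ∪ (((Finset.univ : Finset (Fin n)) \ T) \ X) := by
      ext a
      by_cases haT : a ∈ T
      · have : a ∉ X := Finset.disjoint_left.1 hdisj haT
        simp [haT, this]
      · simp [haT]
    rw [mu, hunion, Finset.card_union_of_disjoint, pow_add]
    · ring
    · refine Finset.disjoint_left.2 fun a haT ha => ?_
      simp at ha
      exact ha.1 haT
  rw [Finset.sum_congr rfl hcard, ← Finset.mul_sum, sum_bern, mul_one]

lemma prob_compl (p : ℝ) (E : Finset (Fin n) → Prop) [DecidablePred E] :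
    ∑ X ∈ (Finset.univ : Finset (Fin n)).powerset.filter (fun X => E X), mu p X
      = 1 - ∑ X ∈ (Finset.univ : Finset (Fin n)).powerset.filter (fun X => ¬ E X), mu p X := by
  classical
  have := Finset.sum_filter_add_sum_filter_not
    ((Finset.univ : Finset (Fin n)).powerset) (fun X => E X) (mu p)
  rw [sum_mu] at this
  linarith

lemma prob_mem (p : ℝ) (i : Fin n) :
    ∑ X ∈ (Finset.univ : Finset (Fin n)).powerset.filter (fun X => i ∈ X), mu p X = p := by
  classical
  have hc := prob_compl p (fun X => i ∈ X)
  rw [hc]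
  have : ∑ X ∈ (Finset.univ : Finset (Fin n)).powerset.filter (fun X => ¬ i ∈ X), mu p X
      = (1-p) ^ ({i} : Finset (Fin n)).card := by
    rw [← prob_avoid]
    congr 1
    ext X
    simp only [Finset.mem_filter, and_congr_right_iff]
    intro _
    constructor
    · intro h
      ext a
      simp only [Finset.mem_inter, Finset.mem_singleton, Finset.notMem_empty, iff_false]
      rintro ⟨haX, rfl⟩
      exact h haX
    · intro h hiX
      have : i ∈ X ∩ ({i} : Finset (Fin n)) := by simp [hiX]
      simp [h] at this
  rw [this]
  simp

lemma prob_Z (p : ℝ) (G : SimpleGraph (Fin n)) (i : Fin n) :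
    ∑ X ∈ (Finset.univ : Finset (Fin n)).powerset.filter (fun X => i ∈ ZSet G X), mu p X
      = (1-p) ^ (insert i (N2 G i)).card := by
  classical
  rw [← prob_avoid]
  congr 1
  ext X
  simp only [Finset.mem_filter, mem_ZSet]
  constructor
  · rintro ⟨hX, hiX, hN⟩
    refine ⟨hX, ?_⟩
    ext a
    simp only [Finset.mem_inter, Finset.mem_insert, Finset.notMem_empty, iff_false]
    rintro ⟨haX, (rfl | haN)⟩
    · exact hiX haX
    · exact (Finset.eq_empty_iff_forall_notMem.1 hN a) (Finset.mem_inter.2 ⟨haN, haX⟩)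
  · rintro ⟨hX, hE⟩
    have hE' := Finset.eq_empty_iff_forall_notMem.1 hE
    refine ⟨hX, fun hiX => hE' i (Finset.mem_inter.2 ⟨hiX, Finset.mem_insert_self _ _⟩), ?_⟩
    ext a
    simp only [Finset.mem_inter, Finset.notMem_empty, iff_false]
    rintro ⟨haN, haX⟩
    exact hE' a (Finset.mem_inter.2 ⟨haX, Finset.mem_insert_of_mem haN⟩)


lemma ite_mu_nonneg {p : ℝ} (h0 : 0 ≤ p) (h1 : p ≤ 1) (X : Finset (Fin n)) (c : Prop)
    [Decidable c] : 0 ≤ if c then mu p X else 0 := by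
  split_ifs
  exacts [mu_nonneg h0 h1 X, le_rfl]

lemma prob_Z_le {p : ℝ} (h0 : 0 ≤ p) (h1 : p ≤ 1) (G : SimpleGraph (Fin n)) (i : Fin n)
    {δ : ℕ} (hδ : δ ≤ hopDeg G i) :
    ∑ X ∈ (Finset.univ : Finset (Fin n)).powerset.filter (fun X => i ∈ ZSet G X), mu p X
      ≤ (1-p) ^ (δ+1) := by
  rw [prob_Z]
  have hni : i ∉ N2 G i := by simp [mem_N2, SimpleGraph.dist_self]
  have hcard : (insert i (N2 G i)).card = hopDeg G i + 1 := by
    rw [Finset.card_insert_of_notMem hni]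
    rfl
  rw [hcard]
  exact pow_le_pow_of_le_one (by linarith) (by linarith) (by omega)

lemma exists_small (G : SimpleGraph (Fin n)) {p : ℝ} (h0 : 0 < p) (h1 : p < 1)
    {δ : ℕ} (hδ : ∀ i, δ ≤ hopDeg G i) (hδ1 : 1 ≤ δ) :
    ∃ X : Finset (Fin n), ((D2 G X).card : ℝ) ≤ n * (2*p + 2*(1-p)^(δ+1)) := by
  classical
  set P := (Finset.univ : Finset (Fin n)).powerset with hP
  set B : ℝ := n * (2*p + 2*(1-p)^(δ+1)) with hB
  have hpoint : ∀ i : Fin n,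
      ∑ X ∈ P, (if i ∈ D2 G X then mu p X else 0) ≤ 2*p + 2*(1-p)^(δ+1) := by
    intro i
    have hNe : (N2 G i).Nonempty :=
      Finset.card_pos.1 (lt_of_lt_of_le (by omega : 0 < δ) (hδ i))
    obtain ⟨j, hj⟩ := hNe
    have hsplit : ∀ X ∈ P, (if i ∈ D2 G X then mu p X else 0)
        ≤ ((if i ∈ X then mu p X else 0) + (if i ∈ ZSet G X then mu p X else 0))
          + ((if j ∈ X then mu p X else 0) + (if j ∈ ZSet G X then mu p X else 0)) := by
      intro X _
      have n1 := ite_mu_nonneg h0.le h1.le X (i ∈ X)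
      have n2 := ite_mu_nonneg h0.le h1.le X (i ∈ ZSet G X)
      have n3 := ite_mu_nonneg h0.le h1.le X (j ∈ X)
      have n4 := ite_mu_nonneg h0.le h1.le X (j ∈ ZSet G X)
      by_cases hD : i ∈ D2 G X
      · rw [if_pos hD]
        simp only [D2, Finset.mem_union] at hD
        rcases hD with ((hX | hZ) | hY)
        · rw [if_pos hX] at n1 ⊢
          linarith
        · rw [if_pos hZ] at n2 ⊢
          linarith
        · rcases Finset.mem_union.1 ((mem_Y2.1 hY).2 hj) with hjX | hjZ
          · rw [if_pos hjX] at n3 ⊢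
            linarith
          · rw [if_pos hjZ] at n4 ⊢
            linarith
      · rw [if_neg hD]
        linarith
    have e1 : ∑ X ∈ P, (if i ∈ X then mu p X else 0) = p := by
      rw [← Finset.sum_filter]
      exact prob_mem p i
    have e2 : ∑ X ∈ P, (if i ∈ ZSet G X then mu p X else 0) ≤ (1-p)^(δ+1) := by
      rw [← Finset.sum_filter]
      exact prob_Z_le h0.le h1.le G i (hδ i)
    have e3 : ∑ X ∈ P, (if j ∈ X then mu p X else 0) = p := by
      rw [← Finset.sum_filter]
      exact prob_mem p j
    have e4 : ∑ X ∈ P, (if j ∈ ZSet G X then mu p X else 0) ≤ (1-p)^(δ+1) := by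
      rw [← Finset.sum_filter]
      exact prob_Z_le h0.le h1.le G j (hδ j)
    have hs := Finset.sum_le_sum hsplit
    rw [Finset.sum_add_distrib, Finset.sum_add_distrib, Finset.sum_add_distrib] at hs
    linarith
  have hEcard : ∀ X ∈ P, mu p X * ((D2 G X).card : ℝ)
      = ∑ i : Fin n, (if i ∈ D2 G X then mu p X else 0) := by
    intro X _
    rw [Finset.sum_ite_mem, Finset.univ_inter, Finset.sum_const, nsmul_eq_mul, mul_comm]
  have hE : ∑ X ∈ P, mu p X * ((D2 G X).card : ℝ) ≤ B := by
    calc ∑ X ∈ P, mu p X * ((D2 G X).card : ℝ)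
        = ∑ X ∈ P, ∑ i : Fin n, (if i ∈ D2 G X then mu p X else 0) :=
          Finset.sum_congr rfl hEcard
      _ = ∑ i : Fin n, ∑ X ∈ P, (if i ∈ D2 G X then mu p X else 0) := Finset.sum_comm
      _ ≤ ∑ _i : Fin n, (2*p + 2*(1-p)^(δ+1)) := Finset.sum_le_sum (fun i _ => hpoint i)
      _ = B := by
          rw [Finset.sum_const, Finset.card_univ, Fintype.card_fin, nsmul_eq_mul, hB]
  have hgsum : ∑ X ∈ P, mu p X * B = B := by
    rw [← Finset.sum_mul, sum_mu, one_mul]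
  have hcmp : ∑ X ∈ P, mu p X * ((D2 G X).card : ℝ) ≤ ∑ X ∈ P, mu p X * B := by
    rw [hgsum]
    exact hE
  obtain ⟨X, _, hX⟩ := Finset.exists_le_of_sum_le (⟨∅, by simp [hP]⟩ : P.Nonempty) hcmp
  exact ⟨X, le_of_mul_le_mul_left hX (mu_pos h0 h1 X)⟩

end Stmt17Aux

theorem stmt17 {n : ℕ} (G : SimpleGraph (Fin n)) (hδh : 1 ≤ minHopDeg G) :
    (tsrDomNum G : ℝ) ≤
      2 * n * (Real.log (minHopDeg G + 1) + 1) / (minHopDeg G + 1) := by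
  classical
  set δ := minHopDeg G with hδdef
  have hδle : ∀ i, δ ≤ hopDeg G i := fun i => ciInf_le (OrderBot.bddBelow _) i
  set d : ℝ := (δ : ℝ) + 1 with hd
  have hδ1 : (1:ℝ) ≤ (δ : ℝ) := by exact_mod_cast hδh
  have hd2 : (2:ℝ) ≤ d := by rw [hd]; linarith
  have hdpos : (0:ℝ) < d := by linarith
  set p : ℝ := Real.log d / d with hp
  have hlogpos : 0 < Real.log d := Real.log_pos (by linarith)
  have hp0 : 0 < p := div_pos hlogpos hdpos
  have hlogltd : Real.log d < d := by
    rw [Real.log_lt_iff_lt_exp hdpos]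
    have := Real.add_one_le_exp d
    linarith
  have hp1 : p < 1 := (div_lt_one hdpos).2 hlogltd
  obtain ⟨X, hX⟩ := Stmt17Aux.exists_small G hp0 hp1 hδle hδh
  have hle : tsrDomNum G ≤ (Stmt17Aux.D2 G X).card :=
    Nat.sInf_le ⟨Stmt17Aux.D2 G X, Stmt17Aux.D2_isTSR G X, rfl⟩
  have hcast : (tsrDomNum G : ℝ) ≤ ((Stmt17Aux.D2 G X).card : ℝ) := Nat.cast_le.2 hle
  have hpow : (1-p)^(δ+1) ≤ 1/d := by
    have h1 : (1:ℝ) - p ≤ Real.exp (-p) := by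
      have := Real.add_one_le_exp (-p)
      linarith
    have h2 : (0:ℝ) ≤ 1 - p := by linarith
    have hdc : ((δ + 1 : ℕ) : ℝ) = d := by push_cast [hd]; ring
    calc (1-p)^(δ+1) ≤ (Real.exp (-p))^(δ+1) := pow_le_pow_left₀ h2 h1 _
      _ = Real.exp (((δ+1 : ℕ) : ℝ) * (-p)) := by rw [← Real.exp_nat_mul]
      _ = Real.exp (-Real.log d) := by
          rw [hdc]
          congr 1
          rw [hp]
          field_simp
      _ = 1/d := by rw [Real.exp_neg, Real.exp_log hdpos, one_div]
  have hn0 : (0:ℝ) ≤ (n:ℝ) := Nat.cast_nonneg n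
  have hstep : (n:ℝ) * (2*p + 2*(1-p)^(δ+1)) ≤ (n:ℝ) * (2*p + 2*(1/d)) := by
    apply mul_le_mul_of_nonneg_left _ hn0
    linarith
  have hfinal : (n:ℝ) * (2*p + 2*(1/d)) = 2 * n * (Real.log d + 1) / d := by
    rw [hp]
    field_simp
  calc (tsrDomNum G : ℝ) ≤ ((Stmt17Aux.D2 G X).card : ℝ) := hcast
    _ ≤ (n:ℝ) * (2*p + 2*(1-p)^(δ+1)) := hX
    _ ≤ (n:ℝ) * (2*p + 2*(1/d)) := hstep
    _ = 2 * n * (Real.log d + 1) / d := hfinal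
    _ = 2 * n * (Real.log ((δ:ℝ) + 1) + 1) / ((δ:ℝ) + 1) := by rw [hd]
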